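/- Let ν ≥ 3 be an odd integer, c₀,…,c_{ν−1} ∈ ℝ, c_ν < 0, F(v) = Σ_{j=0}^{ν} c_j v^j, and let μ > ν be an even integer. Fix c ∈ (0,1/8] and K > 0, and for an integer n ≥ 2 set h = c(2n)^{−2}. Let O : Λ_n × Π_n → ℝ be an arbitrary function, let ψ^n : Π_n → ℝ satisfy ‖ψ^n‖_{L^μ(Π_n)} ≤ K, and define v^n : Λ_n × Π_n → ℝ by v^n_0 = ψ^n and v^n_{t+h}(x) = v^n_t(x) + h Δ_n v^n_t(x) + h F(O_t(x) + v^n_t(x)) for t ∈ Λ_n, x ∈ Π_n. Set R^n = 1 + max_{t∈Λ_n∩[0,1]} ‖O_t‖_{L^∞(Π_n)} and A^n_t = max_{s∈Λ_n∩[0,t]} ‖v^n_s‖_{L^μ(Π_n)}. Then there exists a constant N, depending only on c, c₀,…,c_ν, ν, μ, K, such that for every integer n ≥ 2 and every O satisfying (R^n)^{ν(ν+μ)} ≤ n^{2−2(ν−1)/μ}, one has A^n_1 ≤ N (R^n)^{(ν+μ−1)/μ}. -/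

import Mathlib

open Finset
open scoped BigOperators Real

noncomputable section

/-- The discrete Laplacian `Δₙ f(x) = (2n)²(f(x+1/(2n)) - 2f(x) + f(x-1/(2n)))` on the grid
`Πₙ`, grid points being indexed by `ZMod (2n)`. -/
def dLap (n : ℕ) (f : ZMod (2*n) → ℝ) (x : ZMod (2*n)) : ℝ :=
  (2*(n:ℝ))^2 * (f (x + 1) - 2 * f x + f (x - 1))

/-- The polynomial nonlinearity `F(y) = ∑_{j=0}^ν c_j y^j`. -/
def polyF (ν : ℕ) (c : ℕ → ℝ) (y : ℝ) : ℝ := ∑ j ∈ Finset.range (ν+1), c j * y^j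

/-- Maximum of `g(0), …, g(M)`. -/
def finMax (M : ℕ) (g : ℕ → ℝ) : ℝ :=
  (Finset.range (M+1)).sup' Finset.nonempty_range_add_one g

/-- The discrete `L^μ(Πₙ)` norm of a real grid function, `μ` a positive integer. -/
def gridLmu (n : ℕ) (μ : ℕ) (f : ZMod (2*n) → ℝ) : ℝ :=
  ((2*(n:ℝ))⁻¹ * ∑ k ∈ Finset.range (2*n), |f (k : ZMod (2*n))|^μ) ^ ((μ:ℝ)⁻¹)

/-- The discrete `L^∞(Πₙ)` norm of a real grid function (for `n ≥ 1`). -/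
def gridLinf (n : ℕ) (f : ZMod (2*n) → ℝ) : ℝ :=
  finMax (2*n - 1) (fun k => |f (k : ZMod (2*n))|)

/-- `∑ |c_j|`. -/
def Cfc (ν : ℕ) (c : ℕ → ℝ) : ℝ := ∑ j ∈ Finset.range (ν+1), |c j|
/-- the dissipativity threshold `z₀`. -/
def zz (ν : ℕ) (c : ℕ → ℝ) : ℝ := 1 + Cfc ν c / (-(c ν))
/-- the per-step `L^μ` input constant. -/
def CD (ν μ : ℕ) (c : ℕ → ℝ) : ℝ :=
  (μ:ℝ) * (zz ν c + 1)^(μ-1) * Cfc ν c * (zz ν c + 2)^ν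

/-- crude iteration bound for small `n`. -/
def Qit (ν : ℕ) (Cf R₀ q0 : ℝ) : ℕ → ℝ
  | 0 => q0
  | (m+1) => Qit ν Cf R₀ q0 m + Cf * (1 + R₀ + Qit ν Cf R₀ q0 m)^ν

namespace SchemeAux

lemma finMax_le {M : ℕ} {g : ℕ → ℝ} {B : ℝ} (h : ∀ k, k ≤ M → g k ≤ B) : finMax M g ≤ B :=
  Finset.sup'_le _ _ fun k hk => h k (Nat.lt_succ_iff.mp (Finset.mem_range.mp hk))

lemma le_finMax {M : ℕ} {g : ℕ → ℝ} {k : ℕ} (h : k ≤ M) : g k ≤ finMax M g :=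
  Finset.le_sup' g (Finset.mem_range.mpr (Nat.lt_succ_iff.mpr h))

lemma abs_le_gridLinf {n : ℕ} (hn : 1 ≤ n) (f : ZMod (2*n) → ℝ) (x : ZMod (2*n)) :
    |f x| ≤ gridLinf n f := by
  haveI : NeZero (2*n) := ⟨by omega⟩
  have hx : ((x.val : ℕ) : ZMod (2*n)) = x := ZMod.natCast_rightInverse x
  have hval : x.val ≤ 2*n - 1 := by
    have := ZMod.val_lt x; omega
  have := le_finMax (g := fun k => |f (k : ZMod (2*n))|) hval
  simpa [hx, gridLinf] using this

lemma gridLinf_nonneg {n : ℕ} (f : ZMod (2*n) → ℝ) : 0 ≤ gridLinf n f :=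
  le_trans (abs_nonneg _) (le_finMax (g := fun k => |f (k : ZMod (2*n))|) (Nat.zero_le _))

lemma sum_range_eq_sum_univ {n : ℕ} [NeZero (2*n)] (g : ZMod (2*n) → ℝ) :
    ∑ k ∈ Finset.range (2*n), g (k : ZMod (2*n)) = ∑ x : ZMod (2*n), g x := by
  refine Finset.sum_nbij' (i := fun k => (k : ZMod (2*n))) (j := fun x => x.val) ?_ ?_ ?_ ?_ ?_
  · intro k _; exact Finset.mem_univ _
  · intro x _; exact Finset.mem_range.mpr (ZMod.val_lt x)
  · intro k hk; exact ZMod.val_cast_of_lt (Finset.mem_range.mp hk)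
  · intro x _; exact ZMod.natCast_rightInverse x
  · intro k _; rfl

lemma sum_shift {n : ℕ} [NeZero (2*n)] (g : ZMod (2*n) → ℝ) (a : ZMod (2*n)) :
    ∑ x : ZMod (2*n), g (x + a) = ∑ x : ZMod (2*n), g x :=
  Fintype.sum_equiv (Equiv.addRight a) _ _ (fun _ => rfl)

lemma base_nonneg (n μ : ℕ) (f : ZMod (2*n) → ℝ) :
    0 ≤ (2*(n:ℝ))⁻¹ * ∑ k ∈ Finset.range (2*n), |f (k : ZMod (2*n))|^μ := by
  apply mul_nonneg (by positivity)
  exact Finset.sum_nonneg fun _ _ => by positivity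

lemma gridLmu_le_gridLinf {n μ : ℕ} (hn : 1 ≤ n) (hμ : 1 ≤ μ) (f : ZMod (2*n) → ℝ) :
    gridLmu n μ f ≤ gridLinf n f := by
  have h2n : (0:ℝ) < 2*n := by positivity
  have hsum : ∑ k ∈ Finset.range (2*n), |f (k : ZMod (2*n))|^μ ≤ (2*(n:ℝ)) * (gridLinf n f)^μ := by
    calc ∑ k ∈ Finset.range (2*n), |f (k : ZMod (2*n))|^μ
        ≤ ∑ _k ∈ Finset.range (2*n), (gridLinf n f)^μ := by
          apply Finset.sum_le_sum
          intro k hk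
          apply pow_le_pow_left₀ (abs_nonneg _)
          exact le_finMax (g := fun k => |f (k : ZMod (2*n))|)
            (by have := Finset.mem_range.mp hk; omega)
      _ = (2*(n:ℝ)) * (gridLinf n f)^μ := by
          rw [Finset.sum_const, Finset.card_range, nsmul_eq_mul]; push_cast; ring
  have hbase : (2*(n:ℝ))⁻¹ * ∑ k ∈ Finset.range (2*n), |f (k : ZMod (2*n))|^μ
      ≤ (gridLinf n f)^μ := by
    rw [inv_mul_le_iff₀ h2n]
    exact hsum
  calc gridLmu n μ f ≤ ((gridLinf n f)^μ) ^ ((μ:ℝ)⁻¹) :=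
        Real.rpow_le_rpow (base_nonneg n μ f) hbase (by positivity)
    _ = gridLinf n f := Real.pow_rpow_inv_natCast (gridLinf_nonneg f) (by omega)

lemma gridLinf_le_gridLmu {n μ : ℕ} (hn : 1 ≤ n) (hμ : 1 ≤ μ) (f : ZMod (2*n) → ℝ) :
    gridLinf n f ≤ (2*(n:ℝ))^((μ:ℝ)⁻¹) * gridLmu n μ f := by
  apply finMax_le
  intro k hk
  have hk' : k ∈ Finset.range (2*n) := Finset.mem_range.mpr (by omega)
  have h1 : |f (k : ZMod (2*n))|^μ ≤ ∑ j ∈ Finset.range (2*n), |f (j : ZMod (2*n))|^μ :=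
    Finset.single_le_sum (s := Finset.range (2*n)) (f := fun (j : ℕ) => |f ((j : ℕ) : ZMod (2*n))|^μ)
      (fun j _ => by positivity) hk'
  have h2n : (0:ℝ) < 2*n := by positivity
  have h2 : |f (k : ZMod (2*n))|^μ
      ≤ (2*(n:ℝ)) * ((2*(n:ℝ))⁻¹ * ∑ j ∈ Finset.range (2*n), |f (j : ZMod (2*n))|^μ) := by
    rw [← mul_assoc, mul_inv_cancel₀ (ne_of_gt h2n), one_mul]
    exact h1
  calc |f (k : ZMod (2*n))|
      = (|f (k : ZMod (2*n))|^μ) ^ ((μ:ℝ)⁻¹) :=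
        (Real.pow_rpow_inv_natCast (abs_nonneg _) (by omega)).symm
    _ ≤ ((2*(n:ℝ)) * ((2*(n:ℝ))⁻¹ * ∑ j ∈ Finset.range (2*n), |f (j : ZMod (2*n))|^μ)) ^ ((μ:ℝ)⁻¹) :=
        Real.rpow_le_rpow (by positivity) h2 (by positivity)
    _ = (2*(n:ℝ))^((μ:ℝ)⁻¹) * gridLmu n μ f := by
        rw [Real.mul_rpow (le_of_lt h2n) (base_nonneg n μ f)]; rfl

/-- `(a+b)^μ ≤ a^μ + μ (a+b)^(μ-1) b` for `a,b ≥ 0`. -/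
lemma pow_add_le_tel {a b : ℝ} (ha : 0 ≤ a) (hb : 0 ≤ b) {μ : ℕ} (hμ : 1 ≤ μ) :
    (a+b)^μ ≤ a^μ + (μ:ℝ) * (a+b)^(μ-1) * b := by
  have key := geom_sum₂_mul (a+b) a μ
  have hterm : ∀ i ∈ Finset.range μ, (a+b)^i * a^(μ-1-i) ≤ (a+b)^(μ-1) := by
    intro i hi
    have hi' : i < μ := Finset.mem_range.mp hi
    calc (a+b)^i * a^(μ-1-i) ≤ (a+b)^i * (a+b)^(μ-1-i) := by
          apply mul_le_mul_of_nonneg_left (pow_le_pow_left₀ ha (by linarith) _)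
          positivity
      _ = (a+b)^(i + (μ-1-i)) := (pow_add _ _ _).symm
      _ = (a+b)^(μ-1) := by congr 1; omega
  have hsum : ∑ i ∈ Finset.range μ, (a+b)^i * a^(μ-1-i) ≤ (μ:ℝ) * (a+b)^(μ-1) := by
    calc ∑ i ∈ Finset.range μ, (a+b)^i * a^(μ-1-i)
        ≤ ∑ _i ∈ Finset.range μ, (a+b)^(μ-1) := Finset.sum_le_sum hterm
      _ = (μ:ℝ) * (a+b)^(μ-1) := by simp [mul_comm]
  have hsub : (a+b) - a = b := by ring
  have h2 : (a+b)^μ - a^μ ≤ (μ:ℝ) * (a+b)^(μ-1) * b := by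
    rw [← key, hsub]
    exact mul_le_mul_of_nonneg_right hsum hb
  linarith

/-- three-point convexity for even powers -/
lemma convex3 {μ : ℕ} (hμ : Even μ) {θ : ℝ} (hθ : 0 ≤ θ) (hθ' : 2*θ ≤ 1) (a b d : ℝ) :
    ((1-2*θ)*a + θ*b + θ*d)^μ ≤ (1-2*θ)*a^μ + θ*b^μ + θ*d^μ := by
  have h := Real.pow_arith_mean_le_arith_mean_pow_of_even (Finset.range 3)
    (fun i => if i = 0 then (1-2*θ) else θ) (fun i => if i = 0 then a else if i = 1 then b else d)
    (by intro i _; split <;> linarith)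
    (by simp [Finset.sum_range_succ]; ring) hμ
  simpa [Finset.sum_range_succ] using h

lemma abs_polyF_le (ν : ℕ) (c : ℕ → ℝ) (z : ℝ) :
    |polyF ν c z| ≤ (∑ j ∈ Finset.range (ν+1), |c j|) * (1+|z|)^ν := by
  calc |polyF ν c z| ≤ ∑ j ∈ Finset.range (ν+1), |c j * z^j| := Finset.abs_sum_le_sum_abs _ _
    _ ≤ ∑ j ∈ Finset.range (ν+1), |c j| * (1+|z|)^ν := by
        apply Finset.sum_le_sum
        intro j hj
        rw [abs_mul, abs_pow]
        apply mul_le_mul_of_nonneg_left _ (abs_nonneg _)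
        calc |z|^j ≤ (1+|z|)^j := pow_le_pow_left₀ (abs_nonneg _) (by linarith [abs_nonneg z]) _
          _ ≤ (1+|z|)^ν := pow_le_pow_right₀ (by linarith [abs_nonneg z]) (by
              have := Finset.mem_range.mp hj; omega)
    _ = (∑ j ∈ Finset.range (ν+1), |c j|) * (1+|z|)^ν := by rw [← Finset.sum_mul]

lemma polyF_sign {ν : ℕ} (hν : 1 ≤ ν) (hνodd : Odd ν) {c : ℕ → ℝ} (hcν : c ν < 0)
    {z : ℝ} (hz : 1 + (∑ j ∈ Finset.range (ν+1), |c j|) / (-(c ν)) ≤ |z|) :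
    (0 ≤ z → polyF ν c z ≤ 0) ∧ (z ≤ 0 → 0 ≤ polyF ν c z) := by
  set Cf := ∑ j ∈ Finset.range (ν+1), |c j| with hCf
  have hCf0 : 0 ≤ Cf := Finset.sum_nonneg fun _ _ => abs_nonneg _
  have hcν' : 0 < -(c ν) := by linarith
  have hz1 : (1:ℝ) ≤ |z| := by
    have h0 : 0 ≤ Cf / (-(c ν)) := div_nonneg hCf0 (le_of_lt hcν')
    linarith
  have hmain : Cf * |z|^(ν-1) ≤ (-(c ν)) * |z|^ν := by
    have h1 : Cf ≤ (-(c ν)) * |z| := by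
      have h2 : (-(c ν)) * (1 + Cf / (-(c ν))) ≤ (-(c ν)) * |z| :=
        mul_le_mul_of_nonneg_left hz (le_of_lt hcν')
      have h3 : (-(c ν)) * (1 + Cf / (-(c ν))) = -(c ν) + Cf := by
        field_simp
        have e2 : c ν * (Cf / c ν) = Cf := by
          have hne : c ν ≠ 0 := ne_of_lt hcν
          field_simp
        linear_combination e2
      linarith
    calc Cf * |z|^(ν-1) ≤ ((-(c ν)) * |z|) * |z|^(ν-1) :=
          mul_le_mul_of_nonneg_right h1 (by positivity)
      _ = (-(c ν)) * |z|^ν := by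
          rw [mul_assoc]; congr 1
          rw [← pow_succ']; congr 1; omega
  have htail : |∑ j ∈ Finset.range ν, c j * z^j| ≤ Cf * |z|^(ν-1) := by
    calc |∑ j ∈ Finset.range ν, c j * z^j| ≤ ∑ j ∈ Finset.range ν, |c j * z^j| :=
          Finset.abs_sum_le_sum_abs _ _
      _ ≤ ∑ j ∈ Finset.range ν, |c j| * |z|^(ν-1) := by
          apply Finset.sum_le_sum; intro j hj
          rw [abs_mul, abs_pow]
          have hj' : j < ν := Finset.mem_range.mp hj
          exact mul_le_mul_of_nonneg_left (pow_le_pow_right₀ hz1 (by omega)) (abs_nonneg _)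
      _ = (∑ j ∈ Finset.range ν, |c j|) * |z|^(ν-1) := by rw [← Finset.sum_mul]
      _ ≤ Cf * |z|^(ν-1) := mul_le_mul_of_nonneg_right
          (Finset.sum_le_sum_of_subset_of_nonneg (Finset.range_subset_range.mpr (by omega))
            (fun j _ _ => abs_nonneg _)) (by positivity)
  have hsplit : polyF ν c z = c ν * z^ν + ∑ j ∈ Finset.range ν, c j * z^j := by
    rw [polyF, Finset.sum_range_succ]; ring
  constructor
  · intro hz0
    have hzabs : |z| = z := abs_of_nonneg hz0
    have : c ν * z^ν ≤ -(Cf * |z|^(ν-1)) := by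
      have : c ν * z^ν = -((-(c ν)) * |z|^ν) := by rw [hzabs]; ring
      rw [this]; linarith
    rw [hsplit]
    have := abs_le.mp htail
    linarith [this.2]
  · intro hz0
    have hzabs : |z| = -z := abs_of_nonpos hz0
    have hzpow : z^ν = -(|z|^ν) := by
      rw [hzabs]; rw [Odd.neg_pow hνodd]; ring
    have : (-(c ν)) * |z|^ν ≤ c ν * z^ν := by rw [hzpow]; ring_nf; linarith [le_refl ((c ν)*|z|^ν)]
    rw [hsplit]
    have h4 := abs_le.mp htail
    nlinarith [h4.1]

lemma Cfc_nonneg (ν : ℕ) (c : ℕ → ℝ) : 0 ≤ Cfc ν c :=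
  Finset.sum_nonneg fun _ _ => abs_nonneg _

lemma one_le_zz {ν : ℕ} {c : ℕ → ℝ} (hcν : c ν < 0) : 1 ≤ zz ν c := by
  have h0 : 0 ≤ Cfc ν c / (-(c ν)) := div_nonneg (Cfc_nonneg ν c) (by linarith)
  simp only [zz]; linarith

lemma CD_nonneg {ν μ : ℕ} {c : ℕ → ℝ} (hcν : c ν < 0) : 0 ≤ CD ν μ c := by
  have h1 := one_le_zz (ν := ν) hcν
  have h2 := Cfc_nonneg ν c
  have : (0:ℝ) ≤ (zz ν c + 1)^(μ-1) := by positivity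
  have : (0:ℝ) ≤ (zz ν c + 2)^ν := by positivity
  unfold CD; positivity

lemma step_est {ν μ : ℕ} (hν : 3 ≤ ν) (hνodd : Odd ν) (hμ : ν < μ) (hμeven : Even μ)
    {c : ℕ → ℝ} (hcν : c ν < 0)
    {y o h' R L : ℝ} (hh' : 0 ≤ h') (hR : 1 ≤ R) (ho : |o| ≤ R - 1) (hy : |y| ≤ L)
    (hL : (zz ν c + 1)*R ≤ L)
    (hsmall : h' * (Cfc ν c * (1+R+L)^ν) ≤ 1) :
    |y + h' * polyF ν c (o+y)| ≤ L ∧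
    (y + h' * polyF ν c (o+y))^μ ≤ y^μ + h' * (CD ν μ c * R^(μ+ν-1)) := by
  set z₀ := zz ν c with hz₀
  have hz₀1 : 1 ≤ z₀ := one_le_zz hcν
  have hCf0 : 0 ≤ Cfc ν c := Cfc_nonneg ν c
  set F := polyF ν c (o+y) with hF
  have habs_o : -(R-1) ≤ o ∧ o ≤ R - 1 := abs_le.mp ho
  have habs_y : -L ≤ y ∧ y ≤ L := abs_le.mp hy
  have hL2 : 2 ≤ L := by nlinarith
  have hFb : |F| ≤ Cfc ν c * (1+|o+y|)^ν := abs_polyF_le ν c (o+y)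
  have hoyle : |o+y| ≤ R - 1 + L := le_trans (abs_add_le _ _) (by linarith)
  have hglob : h' * |F| ≤ 1 := by
    have h1 : Cfc ν c * (1+|o+y|)^ν ≤ Cfc ν c * (1+R+L)^ν := by
      apply mul_le_mul_of_nonneg_left _ hCf0
      apply pow_le_pow_left₀ (by positivity) (by linarith)
    calc h' * |F| ≤ h' * (Cfc ν c * (1+R+L)^ν) :=
          mul_le_mul_of_nonneg_left (le_trans hFb h1) hh'
      _ ≤ 1 := hsmall
  have hhF_le : h' * F ≤ 1 ∧ -1 ≤ h' * F := by
    have h1 : |h' * F| ≤ 1 := by rw [abs_mul, abs_of_nonneg hh']; exact hglob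
    exact ⟨(abs_le.mp h1).2, (abs_le.mp h1).1⟩
  have hCD : 0 ≤ h' * (CD ν μ c * R^(μ+ν-1)) := by
    have := CD_nonneg (μ := μ) hcν
    positivity
  set ρ := z₀ + R - 1 with hρ
  rcases le_or_gt ρ y with hcase1 | hcase1'
  · have hsz : 1 + Cfc ν c / (-(c ν)) ≤ |o+y| := by
      have h1 : z₀ ≤ o + y := by linarith [habs_o.1]
      have h2 : (0:ℝ) ≤ o + y := by linarith
      rw [abs_of_nonneg h2]; rw [hz₀, zz] at h1; exact h1
    have hFneg : F ≤ 0 := (polyF_sign (by omega) hνodd hcν hsz).1 (by linarith [habs_o.1])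
    have hmul : h' * F ≤ 0 := mul_nonpos_of_nonneg_of_nonpos hh' hFneg
    have hφle : y + h' * F ≤ y := by linarith
    have hφge : 0 ≤ y + h' * F := by linarith [hhF_le.2]
    constructor
    · rw [abs_of_nonneg hφge]; linarith
    · have : (y + h' * F)^μ ≤ y^μ := pow_le_pow_left₀ hφge hφle μ
      linarith
  rcases le_or_gt y (-ρ) with hcase2 | hcase2'
  · have hoynp : o + y ≤ -z₀ := by linarith [habs_o.2]
    have hsz : 1 + Cfc ν c / (-(c ν)) ≤ |o+y| := by
      rw [abs_of_nonpos (by linarith)]; rw [hz₀, zz] at hoynp; linarith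
    have hFpos : 0 ≤ F := (polyF_sign (by omega) hνodd hcν hsz).2 (by linarith)
    have hmul : 0 ≤ h' * F := mul_nonneg hh' hFpos
    have hφge : y ≤ y + h' * F := by linarith
    have hφle : y + h' * F ≤ 0 := by linarith [hhF_le.1]
    have habsφ : |y + h' * F| ≤ |y| := by
      rw [abs_of_nonpos hφle, abs_of_nonpos (by linarith : y ≤ 0)]; linarith
    constructor
    · exact le_trans habsφ hy
    · have : (y + h' * F)^μ ≤ y^μ := by
        rw [← hμeven.pow_abs (y + h' * F), ← hμeven.pow_abs y]
        exact pow_le_pow_left₀ (abs_nonneg _) habsφ μ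
      linarith
  · have hyρ : |y| ≤ ρ := abs_le.mpr ⟨by linarith, by linarith⟩
    have hlocF : |F| ≤ Cfc ν c * ((z₀+2)*R)^ν := by
      refine le_trans hFb (mul_le_mul_of_nonneg_left ?_ hCf0)
      apply pow_le_pow_left₀ (by positivity)
      have h1 : |o+y| ≤ (R-1) + ρ := le_trans (abs_add_le _ _) (by linarith [abs_le.mp hyρ])
      nlinarith
    set b := h' * |F| with hb
    have hb0 : 0 ≤ b := by positivity
    have hb1 : b ≤ 1 := hglob
    have habsφ : |y + h' * F| ≤ |y| + b := by
      refine le_trans (abs_add_le _ _) ?_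
      rw [abs_mul, abs_of_nonneg hh']
    have hsum_le : |y| + b ≤ (z₀+1)*R := by nlinarith [abs_le.mp hyρ]
    constructor
    · exact le_trans habsφ (le_trans hsum_le hL)
    · have h1 : (y + h' * F)^μ ≤ (|y| + b)^μ := by
        rw [← hμeven.pow_abs (y + h' * F)]
        exact pow_le_pow_left₀ (abs_nonneg _) habsφ μ
      have h2 : (|y| + b)^μ ≤ |y|^μ + (μ:ℝ) * (|y| + b)^(μ-1) * b :=
        pow_add_le_tel (abs_nonneg _) hb0 (by omega)
      have h3 : (μ:ℝ) * (|y| + b)^(μ-1) * b ≤ (μ:ℝ) * ((z₀+1)*R)^(μ-1) * b := by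
        apply mul_le_mul_of_nonneg_right _ hb0
        apply mul_le_mul_of_nonneg_left _ (by positivity)
        exact pow_le_pow_left₀ (by positivity) hsum_le _
      have h4 : (μ:ℝ) * ((z₀+1)*R)^(μ-1) * b ≤ h' * (CD ν μ c * R^(μ+ν-1)) := by
        have hble : b ≤ h' * (Cfc ν c * ((z₀+2)*R)^ν) := mul_le_mul_of_nonneg_left hlocF hh'
        have hkey : (μ:ℝ) * ((z₀+1)*R)^(μ-1) * (h' * (Cfc ν c * ((z₀+2)*R)^ν))
            = h' * (CD ν μ c * R^(μ+ν-1)) := by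
          have hexp : (μ-1) + ν = μ+ν-1 := by omega
          rw [CD, mul_pow, mul_pow, ← hexp, pow_add, ← hz₀]; ring
        rw [← hkey]
        apply mul_le_mul_of_nonneg_left hble (by positivity)
      have h5 : |y|^μ = y^μ := hμeven.pow_abs y
      linarith

lemma Qit_nonneg {ν : ℕ} {Cf R₀ q0 : ℝ} (hq : 0 ≤ q0) (hCf : 0 ≤ Cf) (hR : 0 ≤ R₀) :
    ∀ m, 0 ≤ Qit ν Cf R₀ q0 m := by
  intro m
  induction m with
  | zero => exact hq
  | succ m ih =>
    have : (0:ℝ) ≤ Cf * (1 + R₀ + Qit ν Cf R₀ q0 m)^ν := by positivity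
    simpa [Qit] using add_nonneg ih this

lemma Qit_mono {ν : ℕ} {Cf R₀ q0 : ℝ} (hq : 0 ≤ q0) (hCf : 0 ≤ Cf) (hR : 0 ≤ R₀) :
    Monotone (Qit ν Cf R₀ q0) := by
  apply monotone_nat_of_le_succ
  intro m
  have h := Qit_nonneg (ν := ν) hq hCf hR m
  have : (0:ℝ) ≤ Cf * (1 + R₀ + Qit ν Cf R₀ q0 m)^ν := by positivity
  simp only [Qit]; linarith

end SchemeAux

/-- **A priori bound on the approximation (Theorem 3.4, pathwise form).**
With `F` a polynomial of odd degree `ν ≥ 3` with negative leading coefficient, `μ > ν` even,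
`h = c(2n)^{-2}`, initial condition `‖ψⁿ‖_{L^μ(Πₙ)} ≤ K`, and `vⁿ` the solution of the explicit
scheme `vⁿ_{t+h} = vⁿ_t + hΔₙvⁿ_t + hF(O_t + vⁿ_t)`, there is `N = N(c,c₀,…,c_ν,ν,μ,K)` such
that for all `n ≥ 2` and all `O` with `(Rⁿ)^{ν(ν+μ)} ≤ n^{2-2(ν-1)/μ}`, one has
`Aⁿ_1 ≤ N (Rⁿ)^{(ν+μ-1)/μ}`, where `Rⁿ = 1 + max_{s∈Λₙ∩[0,1]}‖O_s‖_{L^∞(Πₙ)}` and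
`Aⁿ_1 = max_{s∈Λₙ∩[0,1]}‖vⁿ_s‖_{L^μ(Πₙ)}`. -/
theorem scheme_apriori_bound
    (ν : ℕ) (hν : 3 ≤ ν) (hνodd : Odd ν) (c : ℕ → ℝ) (hcν : c ν < 0)
    (μ : ℕ) (hμ : ν < μ) (hμeven : Even μ)
    (cc : ℝ) (hcc : 0 < cc) (hcc' : cc ≤ 1/8) (K : ℝ) (hK : 0 < K) :
    ∃ N : ℝ, 0 < N ∧
      ∀ n : ℕ, 2 ≤ n →
      ∀ (O : ℕ → ZMod (2*n) → ℝ) (ψ : ZMod (2*n) → ℝ) (v : ℕ → ZMod (2*n) → ℝ),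
        gridLmu n μ ψ ≤ K →
        v 0 = ψ →
        (∀ (m : ℕ) (x : ZMod (2*n)),
          v (m+1) x = v m x + (cc/(2*(n:ℝ))^2) * dLap n (v m) x
            + (cc/(2*(n:ℝ))^2) * polyF ν c (O m x + v m x)) →
        (1 + finMax (Nat.floor ((2*(n:ℝ))^2/cc)) (fun s => gridLinf n (O s))) ^ (ν*(ν+μ))
            ≤ (n:ℝ) ^ ((2:ℝ) - 2*((ν:ℝ)-1)/(μ:ℝ)) →
        finMax (Nat.floor ((2*(n:ℝ))^2/cc)) (fun s => gridLmu n μ (v s))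
          ≤ N * (1 + finMax (Nat.floor ((2*(n:ℝ))^2/cc)) (fun s => gridLinf n (O s)))
              ^ (((ν:ℝ)+(μ:ℝ)-1)/(μ:ℝ)) := by
  classical
  have hz₀1 : 1 ≤ zz ν c := SchemeAux.one_le_zz hcν
  have hCf0 : 0 ≤ Cfc ν c := SchemeAux.Cfc_nonneg ν c
  have hCD0 : 0 ≤ CD ν μ c := SchemeAux.CD_nonneg hcν
  have hμ0 : (0:ℝ) < μ := by
    have : 0 < μ := by omega
    exact_mod_cast this
  set ε : ℝ := 2*((ν:ℝ)-1)/(μ:ℝ) with hεdef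
  have hε0 : 0 < ε := by
    apply div_pos _ hμ0
    have : (3:ℝ) ≤ ν := by exact_mod_cast hν
    linarith
  set δ : ℝ := min ε 1 with hδdef
  have hδ0 : 0 < δ := lt_min hε0 one_pos
  have hδ1 : δ ≤ 1 := min_le_right _ _
  have hδε : δ ≤ ε := min_le_left _ _
  set A : ℝ := Cfc ν c * 2^ν * (zz ν c + 3)^ν with hAdef
  set B : ℝ := 2 * (Cfc ν c * 2^ν * K^ν) with hBdef
  have hA0 : 0 ≤ A := by positivity
  have hB0 : 0 ≤ B := by positivity
  set G : ℝ := A + B + 1 with hGdef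
  have hG1 : 1 ≤ G := by linarith
  have hG0 : 0 < G := by linarith
  set n₀ : ℕ := ⌈(G:ℝ)^(δ⁻¹)⌉₊ + 2 with hn₀def
  set R₀ : ℝ := ((n₀:ℕ):ℝ)^2 with hR₀def
  have hR₀0 : 0 ≤ R₀ := by positivity
  set q0 : ℝ := 2*(n₀:ℝ)*K with hq0def
  have hq00 : 0 ≤ q0 := by positivity
  set Q : ℕ → ℝ := Qit ν (Cfc ν c) R₀ q0 with hQdef
  set M₀ : ℕ := ⌊(2*(n₀:ℝ))^2/cc⌋₊ with hM₀def
  set N₁ : ℝ := (K^μ + CD ν μ c)^((μ:ℝ)⁻¹) with hN₁def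
  have hN₁0 : 0 < N₁ := Real.rpow_pos_of_pos (by positivity) _
  clear_value ε δ A B G n₀ R₀ q0 Q M₀ N₁
  refine ⟨max N₁ (Q M₀), lt_of_lt_of_le hN₁0 (le_max_left _ _), ?_⟩
  intro n hn O ψ v hψ hv0 hrec hRcond
  haveI : NeZero (2*n) := ⟨by omega⟩
  set M : ℕ := Nat.floor ((2*(n:ℝ))^2/cc) with hMdef
  set R : ℝ := 1 + finMax M (fun s => gridLinf n (O s)) with hRdef
  set θ : ℝ := ((ν:ℝ)+(μ:ℝ)-1)/(μ:ℝ) with hθdef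
  have hθ0 : 0 ≤ θ := by
    apply div_nonneg _ hμ0.le
    have h3 : (3:ℝ) ≤ ν := by exact_mod_cast hν
    have h4 : (0:ℝ) ≤ μ := hμ0.le
    linarith
  have hn1 : (1:ℝ) ≤ (n:ℝ) := by exact_mod_cast Nat.one_le_of_lt hn
  have h2n0 : (0:ℝ) < 2*(n:ℝ) := by positivity
  have h2n1 : (1:ℝ) ≤ 2*(n:ℝ) := by linarith
  have hR1 : 1 ≤ R := by
    rw [hRdef]
    have := SchemeAux.le_finMax (g := fun s => gridLinf n (O s)) (Nat.zero_le M)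
    have := SchemeAux.gridLinf_nonneg (O 0)
    linarith
  have hRθ1 : 1 ≤ R^θ := Real.one_le_rpow hR1 hθ0
  have hRθ0 : 0 ≤ R^θ := by linarith
  have hO : ∀ m, m ≤ M → ∀ x, |O m x| ≤ R - 1 := by
    intro m hm x
    have h1 := SchemeAux.abs_le_gridLinf (by omega) (O m) x
    have h2 := SchemeAux.le_finMax (g := fun s => gridLinf n (O s)) hm
    rw [hRdef]; simp only [add_sub_cancel_left]; exact le_trans h1 h2
  set hq : ℝ := cc/(2*(n:ℝ))^2 with hhqdef
  have hq0 : 0 < hq := by positivity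
  have hq1 : hq ≤ 1 := by
    rw [hhqdef, div_le_one (by positivity)]
    nlinarith only [h2n1, hcc', hcc]
  have hcc34 : (3:ℝ)/4 ≤ 1 - 2*cc := by linarith only [hcc, hcc']
  have hccpos : (0:ℝ) < 1 - 2*cc := by linarith only [hcc, hcc']
  set h' : ℝ := hq/(1-2*cc) with hh'def
  have hh'0 : 0 ≤ h' := by positivity
  have hh'hq : (1-2*cc) * h' = hq := by
    rw [hh'def]; field_simp
  have hqcc : hq * (2*(n:ℝ))^2 = cc := by
    rw [hhqdef]; exact div_mul_cancel₀ cc (by positivity)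
  have hv' : ∀ m x, v (m+1) x
      = (1-2*cc)*(v m x + h' * polyF ν c (O m x + v m x))
        + cc * v m (x+1) + cc * v m (x-1) := by
    intro m x
    rw [hrec m x, dLap]
    have h2nne : ((2:ℝ)*(n:ℝ))^2 ≠ 0 := by positivity
    have hccne : (1:ℝ) - 2*cc ≠ 0 := ne_of_gt hccpos
    rw [hh'def, hhqdef]
    field_simp
    have e : (1 - cc*2)⁻¹ * (1 - cc*2) = 1 := inv_mul_cancel₀ (by intro h; apply hccne; linarith)
    linear_combination (-(cc * polyF ν c (O m x + v m x))) * e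
  set Em : ℕ → ℝ := fun m => (2*(n:ℝ))⁻¹ * ∑ k ∈ Finset.range (2*n), |v m (k : ZMod (2*n))|^μ
    with hEmdef
  have hEm_nonneg : ∀ m, 0 ≤ Em m := fun m => SchemeAux.base_nonneg n μ (v m)
  have hgrid_eq : ∀ m, gridLmu n μ (v m) = (Em m)^((μ:ℝ)⁻¹) := fun m => rfl
  have hEmS : ∀ m, Em m = (2*(n:ℝ))⁻¹ * ∑ x : ZMod (2*n), (v m x)^μ := by
    intro m
    rw [hEmdef]
    dsimp only
    congr 1
    rw [SchemeAux.sum_range_eq_sum_univ (g := fun x => |v m x|^μ)]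
    exact Finset.sum_congr rfl fun x _ => hμeven.pow_abs _
  have hh'le : h' ≤ ((n:ℝ)^2)⁻¹ := by
    rw [hh'def, hhqdef, div_div, ← one_div ((n:ℝ)^2), div_le_div_iff₀ (by positivity) (by positivity)]
    nlinarith only [hcc', hcc, sq_nonneg (n:ℝ), hn1]
  have hMhq : (M:ℝ) * hq ≤ 1 := by
    have hMle : (M:ℝ) ≤ (2*(n:ℝ))^2/cc := Nat.floor_le (by positivity)
    have h1 : (M:ℝ) * hq ≤ ((2*(n:ℝ))^2/cc) * hq := mul_le_mul_of_nonneg_right hMle hq0.le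
    have h2 : ((2*(n:ℝ))^2/cc) * hq = 1 := by
      rw [hhqdef]; field_simp
    linarith
  clear_value M R θ hq h' Em
  -- the convexity step, valid in both branches
  have hconv : ∀ m, (∑ x : ZMod (2*n), (v (m+1) x)^μ)
      ≤ (1-2*cc) * (∑ x : ZMod (2*n), (v m x + h' * polyF ν c (O m x + v m x))^μ)
        + 2*cc * (∑ x : ZMod (2*n), (v m x)^μ) := by
    intro m
    have hstep : ∀ x : ZMod (2*n), (v (m+1) x)^μ
        ≤ (1-2*cc)*(v m x + h' * polyF ν c (O m x + v m x))^μ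
          + cc*(v m (x+1))^μ + cc*(v m (x-1))^μ := by
      intro x
      rw [hv' m x]
      exact SchemeAux.convex3 hμeven hcc.le (by linarith) _ _ _
    calc (∑ x : ZMod (2*n), (v (m+1) x)^μ)
        ≤ ∑ x : ZMod (2*n), ((1-2*cc)*(v m x + h' * polyF ν c (O m x + v m x))^μ
            + cc*(v m (x+1))^μ + cc*(v m (x-1))^μ) :=
          Finset.sum_le_sum fun x _ => hstep x
      _ = (1-2*cc) * (∑ x : ZMod (2*n), (v m x + h' * polyF ν c (O m x + v m x))^μ)
          + cc * (∑ x : ZMod (2*n), (v m (x+1))^μ)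
          + cc * (∑ x : ZMod (2*n), (v m (x-1))^μ) := by
          rw [Finset.sum_add_distrib, Finset.sum_add_distrib, Finset.mul_sum, Finset.mul_sum,
            Finset.mul_sum]
      _ = (1-2*cc) * (∑ x : ZMod (2*n), (v m x + h' * polyF ν c (O m x + v m x))^μ)
          + 2*cc * (∑ x : ZMod (2*n), (v m x)^μ) := by
          have hs1 : (∑ x : ZMod (2*n), (v m (x+1))^μ) = ∑ x : ZMod (2*n), (v m x)^μ :=
            SchemeAux.sum_shift (g := fun z => (v m z)^μ) 1
          have hs2 : (∑ x : ZMod (2*n), (v m (x-1))^μ) = ∑ x : ZMod (2*n), (v m x)^μ := by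
            have := SchemeAux.sum_shift (g := fun z => (v m z)^μ) (-1)
            simpa [sub_eq_add_neg] using this
          rw [hs1, hs2]; ring
  have htri : ∀ (a b d : ℝ), |(1-2*cc)*a + cc*b + cc*d| ≤ (1-2*cc)*|a| + cc*|b| + cc*|d| := by
    intro a b d
    calc |(1-2*cc)*a + cc*b + cc*d| ≤ |(1-2*cc)*a + cc*b| + |cc*d| := abs_add_le _ _
      _ ≤ |(1-2*cc)*a| + |cc*b| + |cc*d| := by linarith only [abs_add_le ((1-2*cc)*a) (cc*b)]
      _ = (1-2*cc)*|a| + cc*|b| + cc*|d| := by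
          rw [abs_mul, abs_mul, abs_mul, abs_of_nonneg hccpos.le, abs_of_nonneg hcc.le]
  by_cases hbig : n₀ ≤ n
  · -- ======================= large n branch =======================
    set P : ℝ := (2*(n:ℝ))^((μ:ℝ)⁻¹) * K with hPdef
    have hP0 : 0 ≤ P := by rw [hPdef]; positivity
    set L : ℝ := (zz ν c + 1)*R + P with hLdef
    have hzR0 : (0:ℝ) ≤ (zz ν c + 1)*R := by nlinarith only [hz₀1, hR1]
    have hLc : (zz ν c + 1)*R ≤ L := by rw [hLdef]; linarith only [hP0]
    have hL0 : (0:ℝ) ≤ L := by rw [hLdef]; linarith only [hP0, hzR0]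
    have hsmall : h' * (Cfc ν c * (1+R+L)^ν) ≤ 1 := by
      have hn0' : (0:ℝ) < n := by linarith only [hn1]
      have hRν : R^ν ≤ (n:ℝ)^((2:ℝ)-ε) := by
        refine le_trans ?_ hRcond
        exact pow_le_pow_right₀ hR1 (Nat.le_mul_of_pos_right ν (by omega))
      have hbν : ((2*(n:ℝ))^((μ:ℝ)⁻¹))^ν ≤ 2*(n:ℝ) := by
        rw [← Real.rpow_natCast ((2*(n:ℝ))^((μ:ℝ)⁻¹)) ν, ← Real.rpow_mul (le_of_lt h2n0)]
        calc (2*(n:ℝ))^((μ:ℝ)⁻¹*(ν:ℝ)) ≤ (2*(n:ℝ))^(1:ℝ) := by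
              apply Real.rpow_le_rpow_of_exponent_le h2n1
              rw [inv_mul_eq_div, div_le_one hμ0]
              exact_mod_cast le_of_lt hμ
          _ = 2*(n:ℝ) := Real.rpow_one _
      have h1RL : (1+R+L)^ν ≤ 2^ν * (((zz ν c+3)*R)^ν + P^ν) := by
        have hle : 1+R+L ≤ (zz ν c+3)*R + P := by rw [hLdef]; linarith only [hR1]
        calc (1+R+L)^ν ≤ ((zz ν c+3)*R + P)^ν :=
              pow_le_pow_left₀ (by linarith only [hR1, hL0]) hle ν
          _ ≤ 2^(ν-1) * (((zz ν c+3)*R)^ν + P^ν) := add_pow_le (by nlinarith only [hz₀1, hR1]) hP0 ν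
          _ ≤ 2^ν * (((zz ν c+3)*R)^ν + P^ν) := by
              apply mul_le_mul_of_nonneg_right (pow_le_pow_right₀ one_le_two (by omega))
              have h1 : (0:ℝ) ≤ ((zz ν c+3)*R)^ν := by positivity
              have h2 : (0:ℝ) ≤ P^ν := by positivity
              linarith only [h1, h2]
      have h3 : ((zz ν c+3)*R)^ν ≤ (zz ν c+3)^ν * (n:ℝ)^((2:ℝ)-ε) := by
        rw [mul_pow]
        apply mul_le_mul_of_nonneg_left hRν (by positivity)
      have h4 : P^ν ≤ (2*(n:ℝ)) * K^ν := by
        rw [hPdef, mul_pow]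
        exact mul_le_mul_of_nonneg_right hbν (by positivity)
      have h5 : Cfc ν c * (1+R+L)^ν
          ≤ Cfc ν c * (2^ν * ((zz ν c+3)^ν * (n:ℝ)^((2:ℝ)-ε) + (2*(n:ℝ))*K^ν)) := by
        apply le_trans (mul_le_mul_of_nonneg_left h1RL hCf0)
        apply mul_le_mul_of_nonneg_left _ hCf0
        apply mul_le_mul_of_nonneg_left _ (by positivity)
        linarith only [h3, h4]
      have h6 : Cfc ν c * (2^ν * ((zz ν c+3)^ν * (n:ℝ)^((2:ℝ)-ε) + (2*(n:ℝ))*K^ν))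
          = A * (n:ℝ)^((2:ℝ)-ε) + B * (n:ℝ) := by rw [hAdef, hBdef]; ring
      have hCfL0 : (0:ℝ) ≤ Cfc ν c * (1+R+L)^ν := by
        apply mul_nonneg hCf0 (pow_nonneg (by linarith only [hR1, hL0]) ν)
      have h7 : h' * (Cfc ν c * (1+R+L)^ν)
          ≤ ((n:ℝ)^2)⁻¹ * (A * (n:ℝ)^((2:ℝ)-ε) + B*(n:ℝ)) := by
        apply mul_le_mul hh'le (by rw [← h6]; exact h5) hCfL0 (by positivity)
      have e1 : (n:ℝ)^((2:ℝ)-ε) * ((n:ℝ)^2)⁻¹ = (n:ℝ)^(-ε) := by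
        rw [← Real.rpow_natCast (n:ℝ) 2, ← Real.rpow_neg hn0'.le, ← Real.rpow_add hn0']
        congr 1
        push_cast
        ring
      have e2 : (n:ℝ) * ((n:ℝ)^2)⁻¹ = (n:ℝ)^(-(1:ℝ)) := by
        rw [Real.rpow_neg_one, sq, mul_inv, ← mul_assoc,
          mul_inv_cancel₀ (ne_of_gt hn0'), one_mul]
      have h8 : ((n:ℝ)^2)⁻¹ * (A * (n:ℝ)^((2:ℝ)-ε) + B*(n:ℝ))
          = A * (n:ℝ)^(-ε) + B * (n:ℝ)^(-(1:ℝ)) := by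
        rw [← e1, ← e2]; ring
      have d1 : (n:ℝ)^(-ε) ≤ (n:ℝ)^(-δ) :=
        Real.rpow_le_rpow_of_exponent_le hn1 (by linarith only [hδε])
      have d2 : (n:ℝ)^(-(1:ℝ)) ≤ (n:ℝ)^(-δ) :=
        Real.rpow_le_rpow_of_exponent_le hn1 (by linarith only [hδ1])
      have h9 : A * (n:ℝ)^(-ε) + B * (n:ℝ)^(-(1:ℝ)) ≤ (A+B) * (n:ℝ)^(-δ) := by
        have p1 := mul_le_mul_of_nonneg_left d1 hA0
        have p2 := mul_le_mul_of_nonneg_left d2 hB0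
        linarith only [p1, p2]
      have h10 : (A+B) * (n:ℝ)^(-δ) ≤ 1 := by
        have hGn : G ≤ (n:ℝ)^δ := by
          have hc0 : (⌈(G:ℝ)^(δ⁻¹)⌉₊ : ℕ) ≤ n := by omega
          have hc1 : ((G:ℝ)^(δ⁻¹)) ≤ (n:ℝ) :=
            le_trans (Nat.le_ceil _) (by exact_mod_cast hc0)
          calc G = ((G:ℝ)^(δ⁻¹))^δ := by
                rw [← Real.rpow_mul (le_of_lt hG0), inv_mul_cancel₀ (ne_of_gt hδ0),
                  Real.rpow_one]
            _ ≤ (n:ℝ)^δ := Real.rpow_le_rpow (Real.rpow_nonneg (le_of_lt hG0) _) hc1 hδ0.le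
        have hnδ : (0:ℝ) < (n:ℝ)^δ := Real.rpow_pos_of_pos hn0' _
        rw [Real.rpow_neg hn0'.le, ← div_eq_mul_inv, div_le_one hnδ]
        linarith only [hGn, hGdef.ge, hGdef.le]
      linarith only [h7, h8.le, h8.ge, h9, h10]
    -- invariant + energy induction
    set X : ℝ := CD ν μ c * R^(μ+ν-1) with hXdef
    have hX0 : 0 ≤ X := by
      rw [hXdef]; apply mul_nonneg hCD0 (pow_nonneg (by linarith only [hR1]) _)
    have key : ∀ m, m ≤ M → (∀ x, |v m x| ≤ L) ∧ Em m ≤ K^μ + (m:ℝ) * (hq * X) := by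
      intro m
      induction m with
      | zero =>
        intro _
        constructor
        · intro x
          rw [hv0]
          have h1 := SchemeAux.abs_le_gridLinf (n := n) (by omega) ψ x
          have h2 := SchemeAux.gridLinf_le_gridLmu (n := n) (μ := μ) (by omega) (by omega) ψ
          have h3 : (2*(n:ℝ))^((μ:ℝ)⁻¹) * gridLmu n μ ψ ≤ (2*(n:ℝ))^((μ:ℝ)⁻¹) * K :=
            mul_le_mul_of_nonneg_left hψ (by positivity)
          rw [hLdef, hPdef]
          linarith only [h1, h2, h3, hzR0]
        · have h5 : Em 0 = ((Em 0)^((μ:ℝ)⁻¹))^μ :=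
            (Real.rpow_inv_natCast_pow (hEm_nonneg 0) (by omega)).symm
          have h7 : (Em 0)^((μ:ℝ)⁻¹) ≤ K := by
            rw [← hgrid_eq 0, hv0]; exact hψ
          have h6 : ((Em 0)^((μ:ℝ)⁻¹))^μ ≤ K^μ :=
            pow_le_pow_left₀ (Real.rpow_nonneg (hEm_nonneg 0) _) h7 μ
          have : Em 0 ≤ K^μ := by rw [h5]; exact h6
          simpa using this
      | succ m ih =>
        intro hm1
        have hm : m ≤ M := by omega
        obtain ⟨hLinf, hEmle⟩ := ih hm
        have hstep : ∀ x : ZMod (2*n),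
            |v m x + h' * polyF ν c (O m x + v m x)| ≤ L ∧
            (v m x + h' * polyF ν c (O m x + v m x))^μ ≤ (v m x)^μ + h' * X := by
          intro x
          rw [hXdef]
          exact SchemeAux.step_est hν hνodd hμ hμeven hcν hh'0 hR1 (hO m hm x) (hLinf x)
            hLc hsmall
        constructor
        · intro x
          rw [hv' m x]
          have h1 := htri (v m x + h' * polyF ν c (O m x + v m x)) (v m (x+1)) (v m (x-1))
          have h2 := (hstep x).1
          have h3 := hLinf (x+1)
          have h4 := hLinf (x-1)
          have h5 : (1-2*cc)*|v m x + h' * polyF ν c (O m x + v m x)| ≤ (1-2*cc)*L :=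
            mul_le_mul_of_nonneg_left h2 hccpos.le
          have h6 : cc*|v m (x+1)| ≤ cc*L := mul_le_mul_of_nonneg_left h3 hcc.le
          have h7 : cc*|v m (x-1)| ≤ cc*L := mul_le_mul_of_nonneg_left h4 hcc.le
          calc |(1-2*cc)*(v m x + h' * polyF ν c (O m x + v m x)) + cc * v m (x+1) + cc * v m (x-1)|
              ≤ (1-2*cc)*|v m x + h' * polyF ν c (O m x + v m x)| + cc*|v m (x+1)| + cc*|v m (x-1)| := h1
            _ ≤ (1-2*cc)*L + cc*L + cc*L := by linarith only [h5, h6, h7]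
            _ = L := by ring
        · have hsum1 : (∑ x : ZMod (2*n), (v m x + h' * polyF ν c (O m x + v m x))^μ)
              ≤ (∑ x : ZMod (2*n), (v m x)^μ) + (2*(n:ℝ)) * (h' * X) := by
            calc (∑ x : ZMod (2*n), (v m x + h' * polyF ν c (O m x + v m x))^μ)
                ≤ ∑ x : ZMod (2*n), ((v m x)^μ + h' * X) :=
                  Finset.sum_le_sum fun x _ => (hstep x).2
              _ = (∑ x : ZMod (2*n), (v m x)^μ) + (2*(n:ℝ)) * (h' * X) := by
                  rw [Finset.sum_add_distrib, Finset.sum_const, Finset.card_univ, ZMod.card,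
                    nsmul_eq_mul]
                  push_cast
                  ring
          have h9 := hconv m
          have h8 : Em (m+1) ≤ Em m + hq * X := by
            rw [hEmS (m+1), hEmS m]
            have h10 : (1-2*cc) * (∑ x : ZMod (2*n), (v m x + h' * polyF ν c (O m x + v m x))^μ)
                ≤ (1-2*cc)*((∑ x : ZMod (2*n), (v m x)^μ) + (2*(n:ℝ))*(h'*X)) :=
              mul_le_mul_of_nonneg_left hsum1 hccpos.le
            calc (2*(n:ℝ))⁻¹ * (∑ x : ZMod (2*n), (v (m+1) x)^μ)
                ≤ (2*(n:ℝ))⁻¹ * ((1-2*cc)*((∑ x : ZMod (2*n), (v m x)^μ) + (2*(n:ℝ))*(h'*X))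
                    + 2*cc*(∑ x : ZMod (2*n), (v m x)^μ)) := by
                  apply mul_le_mul_of_nonneg_left _ (by positivity)
                  linarith only [h9, h10]
              _ = (2*(n:ℝ))⁻¹ * (∑ x : ZMod (2*n), (v m x)^μ)
                  + ((1-2*cc)*h')*X * ((2*(n:ℝ))⁻¹*(2*(n:ℝ))) := by ring
              _ = (2*(n:ℝ))⁻¹ * (∑ x : ZMod (2*n), (v m x)^μ) + hq * X := by
                  rw [inv_mul_cancel₀ (ne_of_gt h2n0), hh'hq]; ring
          push_cast
          push_cast at hEmle
          linarith only [h8, hEmle]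
    apply SchemeAux.finMax_le
    intro s hs
    have hEs := (key s hs).2
    have hsM : (s:ℝ) ≤ (M:ℝ) := by exact_mod_cast hs
    have hsX : (s:ℝ) * (hq * X) ≤ X := by
      have h1 : (s:ℝ) * (hq * X) ≤ (M:ℝ) * (hq * X) :=
        mul_le_mul_of_nonneg_right hsM (by positivity)
      have h2 : (M:ℝ) * (hq * X) = ((M:ℝ) * hq) * X := by ring
      have h3 : ((M:ℝ) * hq) * X ≤ 1 * X := mul_le_mul_of_nonneg_right hMhq hX0
      linarith only [h1, h2.le, h2.ge, h3]
    have hRp1 : (1:ℝ) ≤ R^(μ+ν-1) := one_le_pow₀ hR1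
    have hEs2 : Em s ≤ (K^μ + CD ν μ c) * R^(μ+ν-1) := by
      have h4 : K^μ ≤ K^μ * R^(μ+ν-1) := le_mul_of_one_le_right (by positivity) hRp1
      have h5 : Em s ≤ K^μ + X := by linarith only [hEs, hsX]
      rw [hXdef] at h5
      nlinarith only [h4, h5]
    have hcast : ((μ+ν-1:ℕ):ℝ) = (ν:ℝ)+(μ:ℝ)-1 := by
      have h1 : 1 ≤ μ + ν := by omega
      push_cast [Nat.cast_sub h1]
      ring
    calc gridLmu n μ (v s) = (Em s)^((μ:ℝ)⁻¹) := hgrid_eq s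
      _ ≤ ((K^μ + CD ν μ c) * R^(μ+ν-1))^((μ:ℝ)⁻¹) :=
          Real.rpow_le_rpow (hEm_nonneg s) hEs2 (by positivity)
      _ = N₁ * (R^(μ+ν-1))^((μ:ℝ)⁻¹) := by
          rw [Real.mul_rpow (by positivity) (by positivity), hN₁def]
      _ = N₁ * R^θ := by
          congr 1
          rw [← Real.rpow_natCast R (μ+ν-1),
            ← Real.rpow_mul (by linarith only [hR1] : (0:ℝ) ≤ R), hθdef, hcast,
            div_eq_mul_inv]
      _ ≤ max N₁ (Q M₀) * R^θ := mul_le_mul_of_nonneg_right (le_max_left _ _) hRθ0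
  · -- ======================= small n branch =======================
    push_neg at hbig
    have hnn₀ : (n:ℝ) ≤ (n₀:ℝ) := by exact_mod_cast le_of_lt hbig
    have hRR0 : R ≤ R₀ := by
      have h1 : R ≤ R^(ν*(ν+μ)) := le_self_pow₀ hR1 (by positivity)
      have h2 : ((n:ℝ))^((2:ℝ)-ε) ≤ (n:ℝ)^(2:ℝ) :=
        Real.rpow_le_rpow_of_exponent_le hn1 (by linarith only [hε0])
      have h3 : (n:ℝ)^(2:ℝ) = (n:ℝ)^(2:ℕ) := by
        rw [← Real.rpow_natCast (n:ℝ) 2]; norm_num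
      have h4 : ((n:ℝ))^(2:ℕ) ≤ ((n₀:ℝ))^(2:ℕ) :=
        pow_le_pow_left₀ (by positivity) hnn₀ 2
      rw [hR₀def]
      calc R ≤ R^(ν*(ν+μ)) := h1
        _ ≤ (n:ℝ)^((2:ℝ)-ε) := hRcond
        _ ≤ (n:ℝ)^(2:ℝ) := h2
        _ = (n:ℝ)^(2:ℕ) := h3
        _ ≤ ((n₀:ℝ))^(2:ℕ) := h4
    have hQ0 : ∀ m, 0 ≤ Q m := by
      intro m; rw [hQdef]; exact SchemeAux.Qit_nonneg hq00 hCf0 hR₀0 m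
    have hQmono : ∀ m m', m ≤ m' → Q m ≤ Q m' := by
      intro m m' h; rw [hQdef]; exact SchemeAux.Qit_mono hq00 hCf0 hR₀0 h
    have hQzero : Q 0 = q0 := by rw [hQdef]; simp [Qit]
    have hQsucc : ∀ m, Q (m+1) = Q m + Cfc ν c * (1+R₀+Q m)^ν := by
      intro m; rw [hQdef]; simp [Qit]
    have key2 : ∀ m, m ≤ M → ∀ x, |v m x| ≤ Q m := by
      intro m
      induction m with
      | zero =>
        intro _ x
        rw [hv0, hQzero, hq0def]
        have h1 := SchemeAux.abs_le_gridLinf (n := n) (by omega) ψ x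
        have h2 := SchemeAux.gridLinf_le_gridLmu (n := n) (μ := μ) (by omega) (by omega) ψ
        have h3 : (2*(n:ℝ))^((μ:ℝ)⁻¹) * gridLmu n μ ψ ≤ (2*(n:ℝ))^((μ:ℝ)⁻¹) * K :=
          mul_le_mul_of_nonneg_left hψ (by positivity)
        have h4 : (2*(n:ℝ))^((μ:ℝ)⁻¹) ≤ 2*(n:ℝ) := by
          calc (2*(n:ℝ))^((μ:ℝ)⁻¹) ≤ (2*(n:ℝ))^(1:ℝ) := by
                apply Real.rpow_le_rpow_of_exponent_le h2n1
                rw [inv_le_one_iff₀]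
                right; exact_mod_cast (by omega : 1 ≤ μ)
            _ = 2*(n:ℝ) := Real.rpow_one _
        have h5 : (2*(n:ℝ))^((μ:ℝ)⁻¹) * K ≤ (2*(n:ℝ)) * K :=
          mul_le_mul_of_nonneg_right h4 hK.le
        have h6 : (2*(n:ℝ)) * K ≤ 2*(n₀:ℝ)*K := by
          apply mul_le_mul_of_nonneg_right _ hK.le
          linarith only [hnn₀]
        linarith only [h1, h2, h3, h5, h6]
      | succ m ih =>
        intro hm1 x
        have hm : m ≤ M := by omega
        have ihx := ih hm
        rw [hv' m x]
        have hOx := hO m hm x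
        have hFb : |polyF ν c (O m x + v m x)| ≤ Cfc ν c * (1+R₀+Q m)^ν := by
          refine le_trans (SchemeAux.abs_polyF_le ν c _) (mul_le_mul_of_nonneg_left ?_ hCf0)
          apply pow_le_pow_left₀ (by positivity)
          have h7 := abs_add_le (O m x) (v m x)
          linarith only [h7, hOx, ihx x, hRR0]
        have h1 := htri (v m x + h' * polyF ν c (O m x + v m x)) (v m (x+1)) (v m (x-1))
        have h2 : |v m x + h' * polyF ν c (O m x + v m x)|
            ≤ Q m + h' * |polyF ν c (O m x + v m x)| := by
          refine le_trans (abs_add_le _ _) ?_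
          rw [abs_mul, abs_of_nonneg hh'0]
          linarith only [ihx x]
        have h5 : (1-2*cc)*|v m x + h' * polyF ν c (O m x + v m x)|
            ≤ (1-2*cc)*(Q m + h' * |polyF ν c (O m x + v m x)|) :=
          mul_le_mul_of_nonneg_left h2 hccpos.le
        have h6 : cc*|v m (x+1)| ≤ cc*Q m := mul_le_mul_of_nonneg_left (ihx (x+1)) hcc.le
        have h7 : cc*|v m (x-1)| ≤ cc*Q m := mul_le_mul_of_nonneg_left (ihx (x-1)) hcc.le
        have h8 : (1-2*cc)*(Q m + h' * |polyF ν c (O m x + v m x)|) + cc*Q m + cc*Q m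
            = Q m + hq * |polyF ν c (O m x + v m x)| := by
          rw [← hh'hq]; ring
        have h9 : hq * |polyF ν c (O m x + v m x)| ≤ Cfc ν c * (1+R₀+Q m)^ν := by
          have h10 := mul_le_of_le_one_left (abs_nonneg (polyF ν c (O m x + v m x))) hq1
          linarith only [h10, hFb]
        rw [hQsucc m]
        calc |(1-2*cc)*(v m x + h' * polyF ν c (O m x + v m x)) + cc * v m (x+1) + cc * v m (x-1)|
            ≤ (1-2*cc)*|v m x + h' * polyF ν c (O m x + v m x)| + cc*|v m (x+1)| + cc*|v m (x-1)| := h1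
          _ ≤ Q m + hq * |polyF ν c (O m x + v m x)| := by linarith only [h5, h6, h7, h8]
          _ ≤ Q m + Cfc ν c * (1+R₀+Q m)^ν := by linarith only [h9]
    have hMM₀ : M ≤ M₀ := by
      rw [hMdef, hM₀def]
      apply Nat.floor_le_floor
      gcongr
    apply SchemeAux.finMax_le
    intro s hs
    have h1 : gridLmu n μ (v s) ≤ gridLinf n (v s) :=
      SchemeAux.gridLmu_le_gridLinf (by omega) (by omega) _
    have h2 : gridLinf n (v s) ≤ Q s := by
      rw [gridLinf]
      exact SchemeAux.finMax_le fun k hk => key2 s hs _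
    have h3 : Q s ≤ Q M₀ := hQmono s M₀ (le_trans hs hMM₀)
    calc gridLmu n μ (v s) ≤ Q M₀ := by linarith only [h1, h2, h3]
      _ ≤ Q M₀ * R^θ := le_mul_of_one_le_right (hQ0 M₀) hRθ1
      _ ≤ max N₁ (Q M₀) * R^θ := mul_le_mul_of_nonneg_right (le_max_right _ _) hRθ0


end
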